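/- (Bipartite expander mixing lemma.) Let G be a d-regular bipartite graph on 2n vertices with parts X and Y (so |X| = |Y| = n), let M be its adjacency matrix with eigenvalues d = λ₁ ≥ λ₂ ≥ ⋯ ≥ λ_{2n} = −d, and set λ = max_{i ≠ 1, 2n} |λ_i|. Then for all S ⊆ X and T ⊆ Y, |e(S,T) − d·|S|·|T|/n| ≤ λ·√(|S|·|T|), where e(S,T) is the number of edges of G with one endpoint in S and the other in T. -/

import Mathlib

open Matrix Polynomial in
theorem aux_charpoly_diag {m : Type*} [Fintype m] [DecidableEq m] (ν : m → ℝ) :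
    (Matrix.diagonal ν).charpoly = ∏ i, (X - C (ν i)) := by
  rw [Matrix.charpoly, charmatrix, RingHom.mapMatrix_apply]
  have : Matrix.scalar m (X : ℝ[X]) - (Matrix.diagonal ν).map C
      = Matrix.diagonal (fun i => X - C (ν i)) := by
    ext i j
    by_cases h : i = j <;> simp [Matrix.scalar, Matrix.diagonal, h, Matrix.map_apply]
  rw [this, Matrix.det_diagonal]

open Matrix Polynomial in
theorem aux_charpoly_conj {m : Type*} [Fintype m] [DecidableEq m] (U B V : Matrix m m ℝ)
    (h1 : U * V = 1) : (U * B * V).charpoly = B.charpoly := by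
  have h1' : U.map (C : ℝ →+* ℝ[X]) * V.map C = 1 := by
    rw [← Matrix.map_mul, h1]; simp
  unfold Matrix.charpoly
  have key : (U * B * V).charmatrix = U.map C * B.charmatrix * V.map C := by
    rw [charmatrix, charmatrix, RingHom.mapMatrix_apply, RingHom.mapMatrix_apply]
    have hm : (U * B * V).map (C : ℝ →+* ℝ[X]) = U.map C * B.map C * V.map C := by
      rw [Matrix.map_mul, Matrix.map_mul]
    rw [hm, mul_sub, sub_mul]
    congr 1
    rw [mul_assoc, (Matrix.scalar_commute (X : ℝ[X]) (fun r => Commute.all _ _)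
      (V.map C)).eq, ← mul_assoc, h1', one_mul]
  rw [key, Matrix.det_mul, Matrix.det_mul]
  have hd : (U.map (C : ℝ →+* ℝ[X])).det * (V.map C).det = 1 := by
    rw [← Matrix.det_mul, h1', Matrix.det_one]
  calc (U.map (C : ℝ →+* ℝ[X])).det * B.charmatrix.det * (V.map C).det
      = (U.map (C : ℝ →+* ℝ[X])).det * (V.map C).det * B.charmatrix.det := by ring
    _ = B.charmatrix.det := by rw [hd, one_mul]

open Polynomial in
theorem aux_roots_prod {ι : Type*} [Fintype ι] (f : ι → ℝ) :
    (∏ i, (X - C (f i))).roots = Finset.univ.val.map f := by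
  rw [← Polynomial.roots_multiset_prod_X_sub_C (Finset.univ.val.map f)]
  congr 1
  rw [Multiset.map_map]
  rfl

set_option maxHeartbeats 1000000 in
open Matrix in
theorem stmt_12 {V : Type*} [Fintype V] [DecidableEq V]
    (G : SimpleGraph V) [DecidableRel G.Adj]
    (X Y : Finset V) (n d : ℕ) (hn : 2 ≤ n)
    (hdisj : Disjoint X Y) (hcover : X ∪ Y = Finset.univ)
    (hX : X.card = n) (hY : Y.card = n)
    (hbip : ∀ u v : V, G.Adj u v → (u ∈ X ∧ v ∈ Y) ∨ (u ∈ Y ∧ v ∈ X))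
    (hreg : ∀ v : V, G.degree v = d)
    (μ : Fin (2 * n) → ℝ) (hmono : Antitone μ)
    (hchar : (G.adjMatrix ℝ).charpoly = ∏ i : Fin (2 * n), (Polynomial.X - Polynomial.C (μ i)))
    (hfirst : μ ⟨0, by omega⟩ = (d : ℝ))
    (hlast : μ ⟨2 * n - 1, by omega⟩ = -(d : ℝ))
    (lam : ℝ)
    (hlam : ∀ i : Fin (2 * n), i ≠ ⟨0, by omega⟩ → i ≠ ⟨2 * n - 1, by omega⟩ → |μ i| ≤ lam)
    (S T : Finset V) (hS : S ⊆ X) (hT : T ⊆ Y) :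
    |((((S ×ˢ T).filter fun p => G.Adj p.1 p.2).card : ℝ)) -
        (d : ℝ) * S.card * T.card / n| ≤
      lam * Real.sqrt ((S.card : ℝ) * T.card) := by
  classical
  set A := G.adjMatrix ℝ with hAdef
  have hsym : A.IsHermitian := by
    rw [Matrix.IsHermitian, Matrix.conjTranspose_eq_transpose_of_trivial]
    exact (G.isSymm_adjMatrix).eq
  set ν : V → ℝ := hsym.eigenvalues with hνdef
  set U : Matrix V V ℝ := (hsym.eigenvectorUnitary : Matrix V V ℝ) with hUdef
  have hU2 : U * star U = 1 := Matrix.mem_unitaryGroup_iff.mp (hsym.eigenvectorUnitary).2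
  have hU1 : star U * U = 1 := Matrix.mem_unitaryGroup_iff'.mp (hsym.eigenvectorUnitary).2
  have hspec : A = U * Matrix.diagonal ν * star U := by
    have h := hsym.spectral_theorem
    rw [Unitary.conjStarAlgAut_apply] at h
    convert h using 3
    all_goals rfl
  have hUT : (star U)ᵀ = U := by
    rw [Matrix.star_eq_conjTranspose, Matrix.conjTranspose_eq_transpose_of_trivial,
      Matrix.transpose_transpose]
  have hinner : ∀ x y : V → ℝ, (star U *ᵥ x) ⬝ᵥ (star U *ᵥ y) = x ⬝ᵥ y := by
    intro x y
    rw [Matrix.dotProduct_mulVec, ← Matrix.mulVec_transpose, hUT, Matrix.mulVec_mulVec, hU2,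
      Matrix.one_mulVec]
  have hUT' : Uᵀ = star U := by
    rw [Matrix.star_eq_conjTranspose, Matrix.conjTranspose_eq_transpose_of_trivial]
  have hquad : ∀ x y : V → ℝ,
      x ⬝ᵥ (A *ᵥ y) = ∑ i, ν i * ((star U *ᵥ x) i * (star U *ᵥ y) i) := by
    intro x y
    conv_lhs => rw [hspec, ← Matrix.mulVec_mulVec, ← Matrix.mulVec_mulVec,
      Matrix.dotProduct_mulVec, ← Matrix.mulVec_transpose, hUT']
    rw [dotProduct]
    refine Finset.sum_congr rfl fun i _ => ?_
    rw [Matrix.mulVec_diagonal]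
    ring
  have hcoeff : ∀ (w : V → ℝ) (t : ℝ), A *ᵥ w = t • w →
      ∀ i, ν i * (star U *ᵥ w) i = t * (star U *ᵥ w) i := by
    intro w t hw i
    have h : star U *ᵥ (A *ᵥ w) = star U *ᵥ (t • w) := by rw [hw]
    rw [Matrix.mulVec_mulVec] at h
    have hSA : star U * A = Matrix.diagonal ν * star U := by
      rw [hspec, ← mul_assoc, ← mul_assoc, hU1, one_mul]
    rw [hSA, ← Matrix.mulVec_mulVec, Matrix.mulVec_smul] at h
    have h2 := congrFun h i
    rw [Matrix.mulVec_diagonal] at h2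
    rw [h2, Pi.smul_apply, smul_eq_mul]
  have hcard2n : Fintype.card V = 2 * n := by
    rw [← Finset.card_univ, ← hcover, Finset.card_union_of_disjoint hdisj, hX, hY]; ring
  have hmul : Multiset.map ν Finset.univ.val = Multiset.map μ Finset.univ.val := by
    have hc : A.charpoly = ∏ i : V, (Polynomial.X - Polynomial.C (ν i)) := by
      rw [hspec, aux_charpoly_conj _ _ _ hU2, aux_charpoly_diag]
    have h2 := hchar
    rw [hc] at h2
    have h3 := congrArg Polynomial.roots h2
    rwa [aux_roots_prod, aux_roots_prod] at h3
  have hmem : ∀ i : V, ∃ j : Fin (2 * n), μ j = ν i := by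
    intro i
    have : ν i ∈ Multiset.map μ Finset.univ.val := by
      rw [← hmul]
      exact Multiset.mem_map_of_mem _ (Finset.mem_univ_val i)
    obtain ⟨j, _, hj⟩ := Multiset.mem_map.mp this
    exact ⟨j, hj⟩
  have hbound : ∀ i : V, |ν i| ≤ (d : ℝ) := by
    intro i
    obtain ⟨j, hj⟩ := hmem i
    have h1 : μ j ≤ (d : ℝ) := by
      rw [← hfirst]; exact hmono (by simp [Fin.le_def])
    have h2 : -(d : ℝ) ≤ μ j := by
      rw [← hlast]
      refine hmono ?_
      rw [Fin.le_def]
      simp only [Fin.val_mk]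
      omega
    rw [← hj]; exact abs_le.mpr ⟨h2, h1⟩
  have hlam0 : 0 ≤ lam := by
    refine le_trans (abs_nonneg (μ ⟨1, by omega⟩)) (hlam _ ?_ ?_) <;>
      · exact Fin.ne_of_val_ne (by simp only [Fin.val_mk]; omega)
  have hn0 : (n:ℝ) ≠ 0 := by positivity
  have hXYmem : ∀ v : V, v ∈ X ↔ v ∉ Y := by
    intro v
    constructor
    · intro hv hv2; exact (Finset.disjoint_left.mp hdisj) hv hv2
    · intro hv
      have hvu : v ∈ X ∪ Y := hcover ▸ Finset.mem_univ v
      rcases Finset.mem_union.mp hvu with h | h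
      · exact h
      · exact absurd h hv
  set iX : V → ℝ := fun v => if v ∈ X then 1 else 0 with hiX
  set iY : V → ℝ := fun v => if v ∈ Y then 1 else 0 with hiY
  set x : V → ℝ := fun v => if v ∈ S then 1 else 0 with hxdef
  set y : V → ℝ := fun v => if v ∈ T then 1 else 0 with hydef
  set one : V → ℝ := iX + iY with honedef
  set w2 : V → ℝ := iX - iY with hw2def
  set x' : V → ℝ := x - ((S.card : ℝ)/n) • iX with hx'def
  set y' : V → ℝ := y - ((T.card : ℝ)/n) • iY with hy'def
  have hdot : ∀ (P Q : Finset V), (fun v => if v ∈ P then (1:ℝ) else 0) ⬝ᵥ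
      (fun v => if v ∈ Q then (1:ℝ) else 0) = ((P ∩ Q).card : ℝ) := by
    intro P Q
    rw [dotProduct]
    have hc : ∀ v ∈ Finset.univ, (if v ∈ P then (1:ℝ) else 0) * (if v ∈ Q then (1:ℝ) else 0)
        = if v ∈ P ∩ Q then (1:ℝ) else 0 := by
      intro v _
      by_cases h1 : v ∈ P <;> by_cases h2 : v ∈ Q <;> simp [h1, h2]
    rw [Finset.sum_congr rfl hc, Finset.sum_ite_mem, Finset.univ_inter, Finset.sum_const,
      nsmul_eq_mul, mul_one]
  have hSY : S ∩ Y = ∅ := Finset.disjoint_iff_inter_eq_empty.mp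
    (Finset.disjoint_of_subset_left hS hdisj)
  have hTX : T ∩ X = ∅ := Finset.disjoint_iff_inter_eq_empty.mp
    (Finset.disjoint_of_subset_left hT hdisj.symm)
  have hXYe : X ∩ Y = ∅ := Finset.disjoint_iff_inter_eq_empty.mp hdisj
  have hYXe : Y ∩ X = ∅ := Finset.disjoint_iff_inter_eq_empty.mp hdisj.symm
  have dxx : x ⬝ᵥ x = (S.card : ℝ) := by rw [hxdef, hdot, Finset.inter_self]
  have dxiX : x ⬝ᵥ iX = (S.card : ℝ) := by
    rw [hxdef, hiX, hdot, Finset.inter_eq_left.mpr hS]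
  have dxiY : x ⬝ᵥ iY = 0 := by rw [hxdef, hiY, hdot, hSY]; simp
  have dyy : y ⬝ᵥ y = (T.card : ℝ) := by rw [hydef, hdot, Finset.inter_self]
  have dyiY : y ⬝ᵥ iY = (T.card : ℝ) := by
    rw [hydef, hiY, hdot, Finset.inter_eq_left.mpr hT]
  have dyiX : y ⬝ᵥ iX = 0 := by rw [hydef, hiX, hdot, hTX]; simp
  have diXiX : iX ⬝ᵥ iX = (n : ℝ) := by rw [hiX, hdot, Finset.inter_self, hX]
  have diYiY : iY ⬝ᵥ iY = (n : ℝ) := by rw [hiY, hdot, Finset.inter_self, hY]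
  have diXiY : iX ⬝ᵥ iY = 0 := by rw [hiX, hiY, hdot, hXYe]; simp
  have diYiX : iY ⬝ᵥ iX = 0 := by rw [hiX, hiY, hdot, hYXe]; simp
  have diXx : iX ⬝ᵥ x = (S.card : ℝ) := by rw [dotProduct_comm]; exact dxiX
  have hiXy : iX ⬝ᵥ y = 0 := by rw [dotProduct_comm]; exact dyiX
  have hiYy : iY ⬝ᵥ y = (T.card : ℝ) := by rw [dotProduct_comm]; exact dyiY
  have diYy : iY ⬝ᵥ y = (T.card : ℝ) := hiYy
  have hAIX : A *ᵥ iX = (d : ℝ) • iY := by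
    ext v
    rw [hAdef, SimpleGraph.adjMatrix_mulVec_apply]
    by_cases hv : v ∈ X
    · have hz : ∀ u ∈ G.neighborFinset v, iX u = 0 := by
        intro u hu
        have hadj := (G.mem_neighborFinset v u).mp hu
        rcases hbip v u hadj with ⟨_, hu2⟩ | ⟨hv2, _⟩
        · rw [hiX]; simp [show u ∉ X from fun hXu => (hXYmem u).mp hXu hu2]
        · exact absurd hv2 ((hXYmem v).mp hv)
      rw [Finset.sum_congr rfl hz, Finset.sum_const, smul_zero]
      have : v ∉ Y := (hXYmem v).mp hv
      simp [hiY, this]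
    · have hvY : v ∈ Y := by
        by_contra hvy
        exact hv ((hXYmem v).mpr hvy)
      have hz : ∀ u ∈ G.neighborFinset v, iX u = 1 := by
        intro u hu
        have hadj := (G.mem_neighborFinset v u).mp hu
        rcases hbip v u hadj with ⟨hv2, _⟩ | ⟨_, hu2⟩
        · exact absurd hv2 hv
        · rw [hiX]; simp [hu2]
      rw [Finset.sum_congr rfl hz, Finset.sum_const, SimpleGraph.card_neighborFinset_eq_degree,
        hreg v, nsmul_eq_mul, mul_one]
      simp [hiY, hvY]
  have hAIY : A *ᵥ iY = (d : ℝ) • iX := by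
    ext v
    rw [hAdef, SimpleGraph.adjMatrix_mulVec_apply]
    by_cases hv : v ∈ X
    · have hz : ∀ u ∈ G.neighborFinset v, iY u = 1 := by
        intro u hu
        have hadj := (G.mem_neighborFinset v u).mp hu
        rcases hbip v u hadj with ⟨_, hu2⟩ | ⟨hv2, _⟩
        · rw [hiY]; simp [hu2]
        · exact absurd hv2 ((hXYmem v).mp hv)
      rw [Finset.sum_congr rfl hz, Finset.sum_const, SimpleGraph.card_neighborFinset_eq_degree,
        hreg v, nsmul_eq_mul, mul_one]
      simp [hiX, hv]
    · have hz : ∀ u ∈ G.neighborFinset v, iY u = 0 := by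
        intro u hu
        have hadj := (G.mem_neighborFinset v u).mp hu
        rcases hbip v u hadj with ⟨hv2, _⟩ | ⟨_, hu2⟩
        · exact absurd hv2 hv
        · rw [hiY]; simp [(Finset.disjoint_left.mp hdisj) hu2]
      rw [Finset.sum_congr rfl hz, Finset.sum_const, smul_zero]
      simp [hiX, hv]
  have hsymdot : ∀ v w : V → ℝ, v ⬝ᵥ (A *ᵥ w) = (A *ᵥ v) ⬝ᵥ w := by
    intro v w
    rw [Matrix.dotProduct_mulVec, ← Matrix.mulVec_transpose]
    congr 1
    rw [← Matrix.conjTranspose_eq_transpose_of_trivial, hsym.eq]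
  have hA1 : A *ᵥ one = (d : ℝ) • one := by
    rw [honedef, Matrix.mulVec_add, hAIX, hAIY, smul_add]
    abel
  have hAw2 : A *ᵥ w2 = (-(d : ℝ)) • w2 := by
    rw [hw2def, Matrix.mulVec_sub, hAIX, hAIY, neg_smul, smul_sub]
    abel
  have hx'one : x' ⬝ᵥ one = 0 := by
    rw [hx'def, honedef, sub_dotProduct, smul_dotProduct,
      dotProduct_add, dotProduct_add, dxiX, dxiY, diXiX, diXiY, smul_eq_mul]
    field_simp
    ring
  have hx'w2 : x' ⬝ᵥ w2 = 0 := by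
    rw [hx'def, hw2def, sub_dotProduct, smul_dotProduct,
      dotProduct_sub, dotProduct_sub, dxiX, dxiY, diXiX, diXiY, smul_eq_mul]
    field_simp
    ring
  have hy'one : y' ⬝ᵥ one = 0 := by
    rw [hy'def, honedef, sub_dotProduct, smul_dotProduct,
      dotProduct_add, dotProduct_add, dyiX, dyiY, diYiX, diYiY, smul_eq_mul]
    field_simp
    ring
  have hy'w2 : y' ⬝ᵥ w2 = 0 := by
    rw [hy'def, hw2def, sub_dotProduct, smul_dotProduct,
      dotProduct_sub, dotProduct_sub, dyiX, dyiY, diYiX, diYiY, smul_eq_mul]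
    field_simp
    ring
  have hx'x'eq : x' ⬝ᵥ x' = (S.card : ℝ) - (S.card : ℝ)/n*(S.card : ℝ) := by
    simp only [hx'def, sub_dotProduct, dotProduct_sub, smul_dotProduct,
      dotProduct_smul, smul_eq_mul, dxx, dxiX, diXx, diXiX]
    rw [div_mul_cancel₀ _ hn0]
    ring
  have hy'y'eq : y' ⬝ᵥ y' = (T.card : ℝ) - (T.card : ℝ)/n*(T.card : ℝ) := by
    simp only [hy'def, sub_dotProduct, dotProduct_sub, smul_dotProduct,
      dotProduct_smul, smul_eq_mul, dyy, dyiY, diYy, diYiY]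
    rw [div_mul_cancel₀ _ hn0]
    ring
  have hx'x' : x' ⬝ᵥ x' ≤ (S.card : ℝ) := by
    rw [hx'x'eq]
    have : (0:ℝ) ≤ (S.card : ℝ)/n*(S.card : ℝ) :=
      mul_nonneg (div_nonneg (Nat.cast_nonneg _) (Nat.cast_nonneg _)) (Nat.cast_nonneg _)
    linarith
  have hy'y' : y' ⬝ᵥ y' ≤ (T.card : ℝ) := by
    rw [hy'y'eq]
    have : (0:ℝ) ≤ (T.card : ℝ)/n*(T.card : ℝ) :=
      mul_nonneg (div_nonneg (Nat.cast_nonneg _) (Nat.cast_nonneg _)) (Nat.cast_nonneg _)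
    linarith
  have hx'x'0 : 0 ≤ x' ⬝ᵥ x' := by
    rw [dotProduct]
    exact Finset.sum_nonneg fun i _ => mul_self_nonneg _
  have hy'y'0 : 0 ≤ y' ⬝ᵥ y' := by
    rw [dotProduct]
    exact Finset.sum_nonneg fun i _ => mul_self_nonneg _
  have hcount : x ⬝ᵥ (A *ᵥ y) =
      (((S ×ˢ T).filter fun p => G.Adj p.1 p.2).card : ℝ) := by
    have hrow : ∀ v, (A *ᵥ y) v = ∑ u ∈ T, (if G.Adj v u then (1:ℝ) else 0) := by
      intro v
      rw [hAdef, Matrix.mulVec, dotProduct]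
      have hc : ∀ u ∈ Finset.univ, G.adjMatrix ℝ v u * y u
          = if u ∈ T then (if G.Adj v u then (1:ℝ) else 0) else 0 := by
        intro u _
        rw [hydef, SimpleGraph.adjMatrix_apply]
        by_cases h1 : u ∈ T <;> by_cases h2 : G.Adj v u <;> simp [h1, h2]
      rw [Finset.sum_congr rfl hc, Finset.sum_ite_mem, Finset.univ_inter]
    rw [dotProduct]
    have hc2 : ∀ v ∈ Finset.univ, x v * (A *ᵥ y) v
        = if v ∈ S then (∑ u ∈ T, (if G.Adj v u then (1:ℝ) else 0)) else 0 := by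
      intro v _
      rw [hrow v, hxdef]
      by_cases h1 : v ∈ S <;> simp [h1]
    rw [Finset.sum_congr rfl hc2, Finset.sum_ite_mem, Finset.univ_inter,
      ← Finset.sum_product', ← Finset.sum_boole]
  have hmain : x' ⬝ᵥ (A *ᵥ y') = x ⬝ᵥ (A *ᵥ y) - (d : ℝ) * S.card * T.card / n := by
    have diXAy : iX ⬝ᵥ (A *ᵥ y) = (d:ℝ) * T.card := by
      rw [hsymdot, hAIX, smul_dotProduct, hiYy, smul_eq_mul]
    simp only [hy'def, hx'def, Matrix.mulVec_sub, Matrix.mulVec_smul, hAIY,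
      sub_dotProduct, dotProduct_sub, smul_dotProduct,
      dotProduct_smul, smul_eq_mul, dxiX, diXiX, diXAy]
    field_simp
    ring
  have honeone : one ⬝ᵥ one = ((2*n : ℕ) : ℝ) := by
    simp only [honedef, add_dotProduct, dotProduct_add, diXiX, diXiY, diYiX, diYiY]
    push_cast; ring
  have hw2w2 : w2 ⬝ᵥ w2 = ((2*n : ℕ) : ℝ) := by
    simp only [hw2def, sub_dotProduct, dotProduct_sub, diXiX, diXiY, diYiX, diYiY]
    push_cast; ring
  have h2npos : (0:ℝ) < ((2*n : ℕ) : ℝ) := by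
    have : 0 < 2*n := by omega
    exact_mod_cast this
  have hterm : ∀ i, |ν i * ((star U *ᵥ x') i * (star U *ᵥ y') i)| ≤
      lam * (|(star U *ᵥ x') i| * |(star U *ᵥ y') i|) := by
    by_cases hld : (d:ℝ) ≤ lam
    · intro i
      rw [abs_mul, abs_mul]
      exact mul_le_mul_of_nonneg_right ((hbound i).trans hld)
        (mul_nonneg (abs_nonneg _) (abs_nonneg _))
    · have hdlam : lam < (d:ℝ) := not_le.mp hld
      have hd0 : (0:ℝ) < d := lt_of_le_of_lt hlam0 hdlam
      have huniq : ∀ (t : ℝ) (w : V → ℝ), A *ᵥ w = t • w → w ⬝ᵥ w ≠ 0 →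
          (Finset.univ.filter fun i => ν i = t).card = 1 →
          ∀ z : V → ℝ, z ⬝ᵥ w = 0 → ∀ i, ν i = t → (star U *ᵥ z) i = 0 := by
        intro t w hw hwne hcard1 z hz i hit
        obtain ⟨i0, hi0⟩ := Finset.card_eq_one.mp hcard1
        have hmemf : ∀ k, ν k = t ↔ k = i0 := by
          intro k
          constructor
          · intro hk
            have hmem1 : k ∈ Finset.univ.filter fun i => ν i = t :=
              Finset.mem_filter.mpr ⟨Finset.mem_univ _, hk⟩
            rw [hi0] at hmem1
            exact Finset.mem_singleton.mp hmem1
          · intro hk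
            have hmem1 : i0 ∈ Finset.univ.filter fun i => ν i = t := by
              rw [hi0]; exact Finset.mem_singleton_self _
            rw [hk]
            exact (Finset.mem_filter.mp hmem1).2
        have hck : ∀ k, k ≠ i0 → (star U *ᵥ w) k = 0 := by
          intro k hk
          have heq := hcoeff w t hw k
          have hne : ν k - t ≠ 0 := sub_ne_zero.mpr (fun h => hk ((hmemf k).mp h))
          have hz0 : (ν k - t) * (star U *ᵥ w) k = 0 := by rw [sub_mul, heq, sub_self]
          rcases mul_eq_zero.mp hz0 with h | h
          · exact absurd h hne
          · exact h
        have hci0 : (star U *ᵥ w) i0 ≠ 0 := by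
          intro h0
          apply hwne
          rw [← hinner w w, dotProduct]
          refine Finset.sum_eq_zero fun k _ => ?_
          by_cases hk : k = i0
          · rw [hk, h0, mul_zero]
          · rw [hck k hk, mul_zero]
        have hz2 : (star U *ᵥ z) ⬝ᵥ (star U *ᵥ w) = 0 := by rw [hinner]; exact hz
        have hsum : (star U *ᵥ z) ⬝ᵥ (star U *ᵥ w) = (star U *ᵥ z) i0 * (star U *ᵥ w) i0 := by
          rw [dotProduct]
          refine Finset.sum_eq_single i0 (fun k _ hk => by rw [hck k hk, mul_zero])
            (fun h => absurd (Finset.mem_univ i0) h)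
        rw [hsum] at hz2
        have hzi0 : (star U *ᵥ z) i0 = 0 := by
          rcases mul_eq_zero.mp hz2 with h | h
          · exact h
          · exact absurd h hci0
        rw [(hmemf i).mp hit]
        exact hzi0
      have hflipν : ∀ t : ℝ, (Finset.filter (fun i : V => t = ν i) Finset.univ)
          = (Finset.filter (fun i : V => ν i = t) Finset.univ) := by
        intro t; ext k; simp [eq_comm]
      have hflipμ : ∀ t : ℝ, (Finset.filter (fun j : Fin (2*n) => t = μ j) Finset.univ)
          = (Finset.filter (fun j : Fin (2*n) => μ j = t) Finset.univ) := by
        intro t; ext k; simp [eq_comm]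
      have hcountgen : ∀ t : ℝ, (Finset.univ.filter fun i : V => ν i = t).card
          = (Finset.univ.filter fun j : Fin (2*n) => μ j = t).card := by
        intro t
        have h1 : Multiset.count t (Multiset.map ν Finset.univ.val)
            = Multiset.count t (Multiset.map μ Finset.univ.val) := by rw [hmul]
        rw [Multiset.count_map, Multiset.count_map] at h1
        have h2 : Multiset.filter (fun a => t = ν a) Finset.univ.val
            = (Finset.filter (fun i : V => t = ν i) Finset.univ).val := rfl
        have h3 : Multiset.filter (fun a => t = μ a) Finset.univ.val
            = (Finset.filter (fun j : Fin (2*n) => t = μ j) Finset.univ).val := rfl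
        rw [h2, h3, hflipν, hflipμ] at h1
        exact h1
      have hd0' : (d:ℝ) ≠ -(d:ℝ) := by intro h; nlinarith
      have hcountd : (Finset.univ.filter fun i : V => ν i = (d:ℝ)).card = 1 := by
        rw [hcountgen]
        have : (Finset.univ.filter fun j : Fin (2*n) => μ j = (d:ℝ))
            = {(⟨0, by omega⟩ : Fin (2*n))} := by
          ext j
          simp only [Finset.mem_filter, Finset.mem_univ, true_and, Finset.mem_singleton]
          constructor
          · intro hj
            by_contra hj0
            by_cases hjl : j = ⟨2*n-1, by omega⟩
            · rw [hjl, hlast] at hj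
              exact hd0' hj.symm
            · have := hlam j hj0 hjl
              rw [hj] at this
              rw [abs_of_pos hd0] at this
              linarith
          · rintro rfl
            exact hfirst
        rw [this, Finset.card_singleton]
      have hcountnd : (Finset.univ.filter fun i : V => ν i = -(d:ℝ)).card = 1 := by
        rw [hcountgen]
        have : (Finset.univ.filter fun j : Fin (2*n) => μ j = -(d:ℝ))
            = {(⟨2*n-1, by omega⟩ : Fin (2*n))} := by
          ext j
          simp only [Finset.mem_filter, Finset.mem_univ, true_and, Finset.mem_singleton]
          constructor
          · intro hj
            by_contra hjl
            by_cases hj0 : j = ⟨0, by omega⟩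
            · rw [hj0, hfirst] at hj
              exact hd0' hj
            · have := hlam j hj0 hjl
              rw [hj, abs_neg, abs_of_pos hd0] at this
              linarith
          · rintro rfl
            exact hlast
        rw [this, Finset.card_singleton]
      intro i
      by_cases hi1 : ν i = (d:ℝ)
      · have ha0 : (star U *ᵥ x') i = 0 :=
          huniq (d:ℝ) one hA1 (by rw [honeone]; exact ne_of_gt h2npos) hcountd x' hx'one i hi1
        rw [ha0]
        simp only [zero_mul, mul_zero, abs_zero]
        exact le_refl 0
      · by_cases hi2 : ν i = -(d:ℝ)
        · have ha0 : (star U *ᵥ x') i = 0 :=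
            huniq (-(d:ℝ)) w2 hAw2 (by rw [hw2w2]; exact ne_of_gt h2npos) hcountnd x' hx'w2 i hi2
          rw [ha0]
          simp only [zero_mul, mul_zero, abs_zero]
          exact le_refl 0
        · obtain ⟨j, hj⟩ := hmem i
          have hj0 : j ≠ ⟨0, by omega⟩ := by
            rintro rfl
            exact hi1 (hj ▸ hfirst)
          have hjl : j ≠ ⟨2*n-1, by omega⟩ := by
            rintro rfl
            exact hi2 (hj ▸ hlast)
          have hlami : |ν i| ≤ lam := by
            rw [← hj]; exact hlam j hj0 hjl
          rw [abs_mul, abs_mul]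
          exact mul_le_mul_of_nonneg_right hlami
            (mul_nonneg (abs_nonneg _) (abs_nonneg _))
  have hsq1 : (∑ i, |(star U *ᵥ x') i|^2) = x' ⬝ᵥ x' := by
    rw [← hinner x' x', dotProduct]
    exact Finset.sum_congr rfl fun i _ => by rw [sq_abs, sq]
  have hsq2 : (∑ i, |(star U *ᵥ y') i|^2) = y' ⬝ᵥ y' := by
    rw [← hinner y' y', dotProduct]
    exact Finset.sum_congr rfl fun i _ => by rw [sq_abs, sq]
  have hfinal : |x' ⬝ᵥ (A *ᵥ y')| ≤ lam * Real.sqrt ((S.card : ℝ) * T.card) := by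
    rw [hquad x' y']
    calc |∑ i, ν i * ((star U *ᵥ x') i * (star U *ᵥ y') i)|
        ≤ ∑ i, |ν i * ((star U *ᵥ x') i * (star U *ᵥ y') i)| :=
          Finset.abs_sum_le_sum_abs _ _
      _ ≤ ∑ i, lam * (|(star U *ᵥ x') i| * |(star U *ᵥ y') i|) :=
          Finset.sum_le_sum fun i _ => hterm i
      _ = lam * ∑ i, |(star U *ᵥ x') i| * |(star U *ᵥ y') i| := by rw [← Finset.mul_sum]
      _ ≤ lam * (Real.sqrt (∑ i, |(star U *ᵥ x') i|^2) * Real.sqrt (∑ i, |(star U *ᵥ y') i|^2)) :=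
          mul_le_mul_of_nonneg_left (Real.sum_mul_le_sqrt_mul_sqrt _ _ _) hlam0
      _ = lam * (Real.sqrt (x' ⬝ᵥ x') * Real.sqrt (y' ⬝ᵥ y')) := by rw [hsq1, hsq2]
      _ ≤ lam * (Real.sqrt (S.card : ℝ) * Real.sqrt (T.card : ℝ)) := by
          refine mul_le_mul_of_nonneg_left ?_ hlam0
          exact mul_le_mul (Real.sqrt_le_sqrt hx'x') (Real.sqrt_le_sqrt hy'y')
            (Real.sqrt_nonneg _) (Real.sqrt_nonneg _)
      _ = lam * Real.sqrt ((S.card : ℝ) * T.card) := by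
          rw [← Real.sqrt_mul (Nat.cast_nonneg _)]
  have hgoal : (((S ×ˢ T).filter fun p => G.Adj p.1 p.2).card : ℝ) -
      (d : ℝ) * S.card * T.card / n = x' ⬝ᵥ (A *ᵥ y') := by
    rw [hmain, hcount]
  rw [hgoal]
  exact hfinal
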